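/- arXiv:1310.0726 — 2 statements merged into one kernel-verified Lean document; each statement's English description precedes it below -/
import Mathlib

section
/- Under the stated assumptions, a right-window cutoff at (t_n + r_n, w_n) holds: lim_{c → +∞} limsup_{n → ∞} sup_{t > t_n + r_n + c·w_n} d_n(t) = 0. (Note that each d_n is nonincreasing in t since all coefficients a_{i,n} are nonnegative, so sup_{t > t_n + r_n + c·w_n} d_n(t) = d_n(t_n + r_n + c·w_n).) -/
open Filter Real
open scoped ENNReal Topology

private lemma slope_ineq {y z : ℝ} (hy : 0 < y) (hyz : y ≤ z) :
    y * (1 - Real.exp (-z)) ≤ z * (1 - Real.exp (-y)) := by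
  set p := Real.exp (-y) with hp
  set E := Real.exp (-(z - y)) with hE
  have hppos : 0 < p := Real.exp_pos _
  have hez : Real.exp (-z) = p * E := by rw [hp, hE, ← Real.exp_add]; ring_nf
  have h1 : 1 - E ≤ z - y := by
    have := Real.add_one_le_exp (-(z - y)); rw [← hE] at this; linarith
  have h2 : (y + 1) * p ≤ 1 := by
    have h2' : y + 1 ≤ Real.exp y := Real.add_one_le_exp y
    have hee : p * Real.exp y = 1 := by rw [hp, ← Real.exp_add]; simp
    nlinarith
  have hE1 : E ≤ 1 := Real.exp_le_one_iff.2 (by linarith)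
  have k1 : 0 ≤ ((z - y) - (1 - E)) * (y * p) := by
    apply mul_nonneg (by linarith) (by positivity)
  have k2 : 0 ≤ (1 - p - y * p) * (z - y) := by
    apply mul_nonneg (by nlinarith) (by linarith)
  rw [hez]; nlinarith

private lemma abel_bound (ρ a : ℕ → ℝ) (t u : ℝ)
    (hρ0 : 0 < ρ 0) (hmono : StrictMono ρ)
    (ha : ∀ i, 0 ≤ a i) (ht : 0 < t) (hu : 0 < u)
    (hA : ∀ i, (∑ j ∈ Finset.range (i + 1), a j) ≤ Real.exp (ρ i * t)) :
    ∀ N, (∑ i ∈ Finset.range N, a i * Real.exp (-(ρ i) * (t + u)))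
      ≤ Real.exp (-(ρ 0) * u) * (2 + t / u) := by
  set s := t + u with hs
  have hρpos : ∀ i, 0 < ρ i := fun i => lt_of_lt_of_le hρ0 (hmono.monotone (Nat.zero_le i))
  have hsu : u ≤ s := by linarith
  have hs0 : 0 < s := by linarith
  have hsuq : s / u = t / u + 1 := by rw [hs, add_div, div_self hu.ne']
  have key : ∀ N : ℕ, (∑ j ∈ Finset.range (N + 1), a j) *
      (Real.exp (-(ρ N) * s) - Real.exp (-(ρ (N+1)) * s))
      ≤ (s / u) * (Real.exp (-(ρ N) * u) - Real.exp (-(ρ (N+1)) * u)) := by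
    intro N
    set δ := ρ (N + 1) - ρ N with hδ
    have hδpos : 0 < δ := sub_pos.2 (hmono (Nat.lt_succ_self N))
    have hslope := slope_ineq (mul_pos hδpos hu) (by nlinarith : δ * u ≤ δ * s)
    have hus : u * (1 - Real.exp (-(δ * s))) ≤ s * (1 - Real.exp (-(δ * u))) := by
      nlinarith [Real.exp_pos (-(δ * s)), Real.exp_pos (-(δ * u))]
    have hSle : (∑ j ∈ Finset.range (N + 1), a j) ≤ Real.exp (ρ N * t) := hA N
    have hSnn : 0 ≤ ∑ j ∈ Finset.range (N + 1), a j :=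
      Finset.sum_nonneg fun _ _ => ha _
    have e1 : Real.exp (ρ N * t) * Real.exp (-(ρ N) * s) = Real.exp (-(ρ N) * u) := by
      rw [← Real.exp_add]; congr 1; rw [hs]; ring
    have e2 : Real.exp (ρ N * t) * Real.exp (-(ρ (N+1)) * s)
        = Real.exp (-(ρ N) * u) * Real.exp (-(δ * s)) := by
      rw [← Real.exp_add, ← Real.exp_add]; congr 1; rw [hδ, hs]; ring
    have e3 : Real.exp (-(ρ (N+1)) * u) = Real.exp (-(ρ N) * u) * Real.exp (-(δ * u)) := by
      rw [← Real.exp_add]; congr 1; rw [hδ]; ring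
    have hmonos : Real.exp (-(ρ (N+1)) * s) ≤ Real.exp (-(ρ N) * s) := by
      apply Real.exp_le_exp.2; nlinarith [hmono (Nat.lt_succ_self N)]
    calc (∑ j ∈ Finset.range (N + 1), a j) *
        (Real.exp (-(ρ N) * s) - Real.exp (-(ρ (N+1)) * s))
        ≤ Real.exp (ρ N * t) * (Real.exp (-(ρ N) * s) - Real.exp (-(ρ (N+1)) * s)) := by
          apply mul_le_mul_of_nonneg_right hSle (by linarith)
      _ = Real.exp (-(ρ N) * u) * (1 - Real.exp (-(δ * s))) := by
          rw [mul_sub, e1, e2]; ring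
      _ ≤ (s / u) * (Real.exp (-(ρ N) * u) - Real.exp (-(ρ (N+1)) * u)) := by
          rw [e3]
          have hpe : (0:ℝ) < Real.exp (-(ρ N) * u) := Real.exp_pos _
          rw [div_mul_eq_mul_div, le_div_iff₀ hu]
          nlinarith
  have inv : ∀ N : ℕ, (∑ i ∈ Finset.range (N + 1), a i * Real.exp (-(ρ i) * s))
      + (s / u) * Real.exp (-(ρ N) * u)
      ≤ (∑ j ∈ Finset.range (N + 1), a j) * Real.exp (-(ρ N) * s)
        + (s / u) * Real.exp (-(ρ 0) * u) := by
    intro N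
    induction N with
    | zero => simp [Finset.sum_range_one]
    | succ N ih =>
      have hk := key N
      rw [Finset.sum_range_succ, Finset.sum_range_succ (f := a)]
      have hmonos : Real.exp (-(ρ N) * s) ≥ Real.exp (-(ρ (N+1)) * s) := by
        apply Real.exp_le_exp.2; nlinarith [hmono (Nat.lt_succ_self N)]
      nlinarith [ih, hk]
  intro N
  cases N with
  | zero => simp; positivity
  | succ N =>
    have h1 := inv N
    have hSle : (∑ j ∈ Finset.range (N + 1), a j) ≤ Real.exp (ρ N * t) := hA N
    have hSnn : 0 ≤ ∑ j ∈ Finset.range (N + 1), a j :=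
      Finset.sum_nonneg fun _ _ => ha _
    have e1 : Real.exp (ρ N * t) * Real.exp (-(ρ N) * s) = Real.exp (-(ρ N) * u) := by
      rw [← Real.exp_add]; congr 1; rw [hs]; ring
    have e4 : Real.exp (-(ρ N) * u) ≤ Real.exp (-(ρ 0) * u) := by
      apply Real.exp_le_exp.2
      nlinarith [hmono.monotone (Nat.zero_le N), hρpos N]
    have hse : 0 < Real.exp (-(ρ N) * s) := Real.exp_pos _
    have hfin : (∑ j ∈ Finset.range (N + 1), a j) * Real.exp (-(ρ N) * s)
        ≤ Real.exp (-(ρ 0) * u) := by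
      calc (∑ j ∈ Finset.range (N + 1), a j) * Real.exp (-(ρ N) * s)
          ≤ Real.exp (ρ N * t) * Real.exp (-(ρ N) * s) :=
            mul_le_mul_of_nonneg_right hSle hse.le
        _ = Real.exp (-(ρ N) * u) := e1
        _ ≤ Real.exp (-(ρ 0) * u) := e4
    have hp0 : 0 < Real.exp (-(ρ N) * u) := Real.exp_pos _
    have hsun : 0 < s / u := by positivity
    have hmain : (∑ i ∈ Finset.range (N + 1), a i * Real.exp (-(ρ i) * s))
        ≤ Real.exp (-(ρ 0) * u) + (s / u) * Real.exp (-(ρ 0) * u) := by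
      nlinarith
    calc (∑ i ∈ Finset.range (N + 1), a i * Real.exp (-(ρ i) * s))
        ≤ Real.exp (-(ρ 0) * u) + (s / u) * Real.exp (-(ρ 0) * u) := hmain
      _ = Real.exp (-(ρ 0) * u) * (2 + t / u) := by rw [hsuq]; ring

private lemma tsum_ofReal_le {f : ℕ → ℝ} {B : ℝ} (hf : ∀ i, 0 ≤ f i)
    (h : ∀ N, ∑ i ∈ Finset.range N, f i ≤ B) :
    ∑' i, ENNReal.ofReal (f i) ≤ ENNReal.ofReal B := by
  rw [ENNReal.tsum_eq_iSup_sum]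
  refine iSup_le fun F => ?_
  obtain ⟨N, hN⟩ := F.exists_nat_subset_range
  calc ∑ i ∈ F, ENNReal.ofReal (f i)
      ≤ ∑ i ∈ Finset.range N, ENNReal.ofReal (f i) := Finset.sum_le_sum_of_subset hN
    _ = ENNReal.ofReal (∑ i ∈ Finset.range N, f i) :=
        (ENNReal.ofReal_sum_of_nonneg fun _ _ => hf _).symm
    _ ≤ ENNReal.ofReal B := ENNReal.ofReal_le_ofReal (h N)

private lemma log_le_half {L : ℝ} (hL : 0 < L) : Real.log L ≤ L / 2 := by
  have hs : Real.sqrt L * Real.sqrt L = L := Real.mul_self_sqrt hL.le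
  have h1 : Real.log (Real.sqrt L) ≤ Real.sqrt L - 1 :=
    Real.log_le_sub_one_of_pos (Real.sqrt_pos.2 hL)
  have h2 : Real.log L = 2 * Real.log (Real.sqrt L) := by
    rw [Real.log_sqrt hL.le]; ring
  nlinarith [sq_nonneg (Real.sqrt L - 2)]

/-- Theorem 2 of Barrera–Ycart: a right-window cutoff at `(t_n + r_n, w_n)` holds:
`lim_{c → +∞} limsup_n sup_{s > t_n + r_n + c w_n} d_n(s) = 0`.
Indices are zero-based: Lean index `i` corresponds to paper index `i+1`. -/
theorem right_window_cutoff
    (a ρ : ℕ → ℕ → ℝ)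
    (hρ_pos : ∀ n i, 0 < ρ n i)
    (hρ_mono : ∀ n, StrictMono (ρ n))
    (ha_nonneg : ∀ n i, 0 ≤ a n i)
    (ha_pos : ∀ n, 0 < a n 0)
    (A : ℕ → ℕ → ℝ)
    (hA : ∀ n i, A n i = max 1 (∑ j ∈ Finset.range (i + 1), a n j))
    (d : ℕ → ℝ → ℝ≥0∞)
    (hd : ∀ n s, d n s = ∑' i, ENNReal.ofReal (a n i * Real.exp (-(ρ n i) * s)))
    (t w r : ℕ → ℝ)
    (ht : ∀ᶠ n in atTop,
      IsLUB (Set.range fun i => Real.log (A n i) / ρ n i) (t n) ∧ 0 < t n)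
    (hw : ∀ n, w n = 1 / ρ n 0)
    (hr : ∀ n, r n = w n * (Real.log (ρ n 0 * t n) - Real.log (Real.log (ρ n 0 * t n))))
    (hPeres : Tendsto (fun n => ρ n 0 * t n) atTop atTop)
    (hα : ∃ α > (0 : ℝ), ∀ᶠ n in atTop, ∀ i, a n (i + 1) ≤ α * A n i) :
    Tendsto
      (fun c : ℝ => Filter.limsup
        (fun n => ⨆ (s : ℝ) (_ : t n + r n + c * w n < s), d n s) atTop)
      atTop (𝓝 (0 : ℝ≥0∞)) := by
  have hbound : ∀ᶠ c : ℝ in atTop,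
      Filter.limsup (fun n => ⨆ (s : ℝ) (_ : t n + r n + c * w n < s), d n s) atTop
        ≤ ENNReal.ofReal (3 * Real.exp (-c)) := by
    filter_upwards [eventually_ge_atTop (0 : ℝ)] with c hc
    apply Filter.limsup_le_of_le (by isBoundedDefault)
    filter_upwards [ht, hPeres.eventually_ge_atTop (Real.exp 2)] with n hn hx
    obtain ⟨hlub, htn⟩ := hn
    have hρ := hρ_pos n 0
    set x := ρ n 0 * t n with hxdef
    set L := Real.log x with hLdef
    have hx0 : (0:ℝ) < x := lt_of_lt_of_le (Real.exp_pos 2) hx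
    have hL2 : (2:ℝ) ≤ L := (Real.le_log_iff_exp_le hx0).2 hx
    have hL0 : (0:ℝ) < L := by linarith
    have hlogL : Real.log L ≤ L / 2 := log_le_half hL0
    set D := L - Real.log L + c with hDdef
    have hD0 : 0 < D := by rw [hDdef]; linarith
    set u := r n + c * w n with hudef
    have huq : u = D / ρ n 0 := by
      rw [hudef, hr n, hw n, ← hxdef, ← hLdef, hDdef]; field_simp
    have hu : 0 < u := by rw [huq]; positivity
    have hAe : ∀ i, (∑ j ∈ Finset.range (i + 1), a n j) ≤ Real.exp (ρ n i * t n) := by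
      intro i
      have h1 : Real.log (A n i) / ρ n i ≤ t n := hlub.1 ⟨i, rfl⟩
      have hA1 : (1:ℝ) ≤ A n i := by rw [hA n i]; exact le_max_left _ _
      have h2 : Real.log (A n i) ≤ ρ n i * t n := by
        rw [div_le_iff₀ (hρ_pos n i)] at h1; linarith
      calc (∑ j ∈ Finset.range (i + 1), a n j) ≤ A n i := by
            rw [hA n i]; exact le_max_right _ _
        _ = Real.exp (Real.log (A n i)) := (Real.exp_log (by linarith)).symm
        _ ≤ Real.exp (ρ n i * t n) := Real.exp_le_exp.2 h2
    have hsup : (⨆ (s : ℝ) (_ : t n + r n + c * w n < s), d n s)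
        ≤ ENNReal.ofReal (Real.exp (-(ρ n 0) * u) * (2 + t n / u)) := by
      refine iSup₂_le fun s hs => ?_
      set u' := s - t n with hu'def
      have huu' : u ≤ u' := by rw [hu'def, hudef]; linarith
      have hu'0 : 0 < u' := lt_of_lt_of_le hu huu'
      have hseq : s = t n + u' := by rw [hu'def]; ring
      rw [hd n s]
      calc (∑' i, ENNReal.ofReal (a n i * Real.exp (-(ρ n i) * s)))
          ≤ ENNReal.ofReal (Real.exp (-(ρ n 0) * u') * (2 + t n / u')) := by
            apply tsum_ofReal_le
              (fun i => mul_nonneg (ha_nonneg n i) (Real.exp_pos _).le)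
            intro N
            have hb := abel_bound (ρ n) (a n) (t n) u' hρ (hρ_mono n)
              (ha_nonneg n) htn hu'0 hAe N
            rw [hseq]; exact hb
        _ ≤ ENNReal.ofReal (Real.exp (-(ρ n 0) * u) * (2 + t n / u)) := by
            apply ENNReal.ofReal_le_ofReal
            have hm1 : Real.exp (-(ρ n 0) * u') ≤ Real.exp (-(ρ n 0) * u) :=
              Real.exp_le_exp.2 (by nlinarith)
            have hm2 : t n / u' ≤ t n / u := by gcongr
            have hp : (0:ℝ) ≤ 2 + t n / u' := by positivity
            exact mul_le_mul hm1 (by linarith) hp (Real.exp_pos _).le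
    refine le_trans hsup (ENNReal.ofReal_le_ofReal ?_)
    -- numeric: exp(-ρ0 u)(2 + t/u) ≤ 3 exp(-c)
    have e1 : -(ρ n 0) * u = -D := by
      rw [huq]; field_simp
    have e2 : t n / u = x / D := by
      rw [huq, div_div_eq_mul_div, mul_comm, ← hxdef]
    rw [e1, e2]
    have hexpD : Real.exp (-D) = Real.exp (-c) * L * x⁻¹ := by
      have hD' : -D = -c + Real.log L + -L := by rw [hDdef]; ring
      rw [hD', Real.exp_add, Real.exp_add, Real.exp_log hL0, hLdef,
        Real.exp_neg (Real.log x), Real.exp_log hx0]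
    rw [hexpD]
    have h2L : 2 * L ≤ x := by
      have ha1 := Real.add_one_le_exp (L / 2)
      have he : Real.exp (L / 2) * Real.exp (L / 2) = Real.exp L := by
        rw [← Real.exp_add]; ring_nf
      have hx' : Real.exp L = x := by rw [hLdef, Real.exp_log hx0]
      nlinarith
    have hsum : L * x⁻¹ * (2 + x / D) ≤ 3 := by
      have e3 : L * x⁻¹ * (2 + x / D) = 2 * L / x + L / D := by
        field_simp
      have g1 : 2 * L / x ≤ 1 := by rw [div_le_one hx0]; linarith
      have g2 : L / D ≤ 2 := by
        rw [div_le_iff₀ hD0, hDdef]; linarith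
      rw [e3]; linarith
    calc Real.exp (-c) * L * x⁻¹ * (2 + x / D)
        = Real.exp (-c) * (L * x⁻¹ * (2 + x / D)) := by ring
      _ ≤ Real.exp (-c) * 3 :=
          mul_le_mul_of_nonneg_left hsum (Real.exp_pos _).le
      _ = 3 * Real.exp (-c) := by ring
  have h0 : Tendsto (fun c : ℝ => ENNReal.ofReal (3 * Real.exp (-c))) atTop (𝓝 0) := by
    have hreal : Tendsto (fun c : ℝ => 3 * Real.exp (-c)) atTop (𝓝 (3 * 0)) :=
      (Real.tendsto_exp_atBot.comp tendsto_neg_atTop_atBot).const_mul 3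
    have h2 := ENNReal.tendsto_ofReal (by simpa using hreal :
      Tendsto (fun c : ℝ => 3 * Real.exp (-c)) atTop (𝓝 0))
    simpa using h2
  exact tendsto_of_tendsto_of_tendsto_of_le_of_le' tendsto_const_nhds h0
    (Eventually.of_forall fun c => zero_le) hbound
end

section
/- Assume that the (possibly infinite) limit γ = lim_{n → ∞} (1 − β_n)·ℓ_n exists in [0, +∞]. Then for every real c, lim_{n → ∞} d_n(1 + ℓ_n/n + c/n) = e^{−c}·(1 + e^{−γ}) (with the convention e^{−∞} = 0). -/
open Filter Real
open scoped ENNReal Topology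

/-- `ℓ_n = log(n / log n)`. -/
noncomputable def ell (n : ℕ) : ℝ := Real.log (n / Real.log n)

/-- Distance to equilibrium of the Ornstein–Uhlenbeck example of Barrera–Ycart:
`d_n(t) = Σ_{i=1}^{9^n} a_{i,n} e^{-ρ_{i,n} t}` with `a_{1,n} = e^n`,
`ρ_{1,n} = n/(1 + (β_n/n) ℓ_n)`, and for `2 ≤ i ≤ 9^n`:
`a_{i,n} = e^{-n}`, `ρ_{i,n} = log(e^n + (i-1) e^{-n})`. -/
noncomputable def dCut (β : ℕ → ℝ) (n : ℕ) (t : ℝ) : ℝ :=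
  Real.exp n * Real.exp (-((n : ℝ) / (1 + β n / n * ell n)) * t) +
    ∑ i ∈ Finset.Icc (2 : ℕ) (9 ^ n),
      Real.exp (-(n : ℝ)) *
        Real.exp (-Real.log (Real.exp n + ((i : ℝ) - 1) * Real.exp (-(n : ℝ))) * t)

/-- Cutoff location `t_n = 1 + β_n ℓ_n / n`. -/
noncomputable def cutT (β : ℕ → ℝ) (n : ℕ) : ℝ := 1 + β n * ell n / n

/-- Window width `w_n = t_n / n`. -/
noncomputable def cutW (β : ℕ → ℝ) (n : ℕ) : ℝ := cutT β n / n

/-- Correction term `r_n = ℓ_n w_n`. -/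
noncomputable def cutR (β : ℕ → ℝ) (n : ℕ) : ℝ := ell n * cutW β n


section Aux
open Asymptotics

lemma tendsto_log_nat : Tendsto (fun n : ℕ => Real.log n) atTop atTop :=
  Real.tendsto_log_atTop.comp tendsto_natCast_atTop_atTop

lemma tendsto_loglog_div_log : Tendsto (fun n : ℕ => Real.log (Real.log n) / Real.log n) atTop (𝓝 0) :=
  (Real.isLittleO_log_id_atTop.comp_tendsto tendsto_log_nat).tendsto_div_nhds_zero

lemma tendsto_log_div_nat : Tendsto (fun n : ℕ => Real.log n / n) atTop (𝓝 0) :=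
  (Real.isLittleO_log_id_atTop.comp_tendsto tendsto_natCast_atTop_atTop).tendsto_div_nhds_zero

lemma ell_eq {n : ℕ} (hn : 2 ≤ n) : ell n = Real.log n - Real.log (Real.log n) := by
  have h1 : (1:ℝ) < n := by exact_mod_cast Nat.lt_of_lt_of_le one_lt_two hn
  have h2 : Real.log n ≠ 0 := ne_of_gt (Real.log_pos h1)
  rw [ell, Real.log_div (by positivity) h2]

lemma ell_eq' : ∀ᶠ n : ℕ in atTop, ell n = Real.log n - Real.log (Real.log n) :=
  eventually_atTop.2 ⟨2, fun _ hn => ell_eq hn⟩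

lemma tendsto_ell_div_log : Tendsto (fun n : ℕ => ell n / Real.log n) atTop (𝓝 1) := by
  have h : Tendsto (fun n : ℕ => 1 - Real.log (Real.log n) / Real.log n) atTop (𝓝 1) := by
    simpa using tendsto_const_nhds.sub tendsto_loglog_div_log
  refine h.congr' ?_
  filter_upwards [ell_eq', tendsto_log_nat.eventually_gt_atTop 0] with n h1 h2
  rw [h1, sub_div, div_self (ne_of_gt h2)]

lemma tendsto_ell_atTop : Tendsto ell atTop atTop := by
  have h := tendsto_log_nat.atTop_mul_pos one_pos tendsto_ell_div_log
  refine h.congr' ?_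
  filter_upwards [tendsto_log_nat.eventually_gt_atTop 0] with n h2
  field_simp

lemma tendsto_log_div_ell_add (c : ℝ) :
    Tendsto (fun n : ℕ => Real.log n / (ell n + c)) atTop (𝓝 1) := by
  have hc : Tendsto (fun n : ℕ => c / Real.log n) atTop (𝓝 0) :=
    tendsto_const_nhds.div_atTop tendsto_log_nat
  have h : Tendsto (fun n : ℕ => (ell n + c) / Real.log n) atTop (𝓝 1) := by
    have := tendsto_ell_div_log.add hc
    rw [add_zero] at this
    refine this.congr' ?_
    filter_upwards [tendsto_log_nat.eventually_gt_atTop 0] with n h2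
    rw [add_div]
  have h2 := h.inv₀ one_ne_zero
  rw [inv_one] at h2
  refine h2.congr' ?_
  filter_upwards [tendsto_log_nat.eventually_gt_atTop 0,
    tendsto_ell_atTop.eventually_gt_atTop (-c)] with n h3 h4
  rw [inv_div]

lemma tendsto_ell_div_nat : Tendsto (fun n : ℕ => ell n / n) atTop (𝓝 0) := by
  have h := tendsto_ell_div_log.mul tendsto_log_div_nat
  rw [mul_zero] at h
  refine h.congr' ?_
  filter_upwards [tendsto_log_nat.eventually_gt_atTop 0] with n h2
  field_simp

lemma tendsto_s (c : ℝ) : Tendsto (fun n : ℕ => (ell n + c) / n) atTop (𝓝 0) := by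
  have hc : Tendsto (fun n : ℕ => c / (n:ℝ)) atTop (𝓝 0) :=
    tendsto_const_nhds.div_atTop tendsto_natCast_atTop_atTop
  have := tendsto_ell_div_nat.add hc
  rw [add_zero] at this
  exact this.congr fun n => (add_div _ _ _).symm

lemma denom_tendsto (β : ℕ → ℝ) (hβ : ∀ n, β n ∈ Set.Icc (0:ℝ) 1) :
    Tendsto (fun n : ℕ => 1 + β n / n * ell n) atTop (𝓝 1) := by
  have h0 : Tendsto (fun n : ℕ => β n / n * ell n) atTop (𝓝 0) := by
    refine squeeze_zero' ?_ ?_ tendsto_ell_div_nat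
    · filter_upwards [tendsto_ell_atTop.eventually_ge_atTop 0, eventually_gt_atTop 0] with n h1 h2
      have h3 := (hβ n).1
      have hn : (0:ℝ) < n := by exact_mod_cast h2
      positivity
    · filter_upwards [tendsto_ell_atTop.eventually_ge_atTop 0, eventually_gt_atTop 0] with n h1 h2
      have h3 := (hβ n).2
      have hn : (0:ℝ) < n := by exact_mod_cast h2
      rw [div_mul_eq_mul_div, div_le_div_iff_of_pos_right hn]
      nlinarith
  simpa using tendsto_const_nhds.add h0

lemma firstTerm_eq (β : ℕ → ℝ) (hβ : ∀ n, β n ∈ Set.Icc (0:ℝ) 1) (c : ℝ) :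
    ∀ᶠ n : ℕ in atTop,
      Real.exp n * Real.exp (-((n : ℝ) / (1 + β n / n * ell n)) * (1 + ell n / n + c / n)) =
      Real.exp ((-((1 - β n) * ell n) - c) / (1 + β n / n * ell n)) := by
  filter_upwards [(denom_tendsto β hβ).eventually (lt_mem_nhds (show (1:ℝ)/2 < 1 by norm_num)),
    eventually_gt_atTop 0] with n hD hn
  have hn' : (n:ℝ) ≠ 0 := by positivity
  have hD' : 1 + β n / n * ell n ≠ 0 := by linarith
  rw [← Real.exp_add]
  congr 1
  have h3 : (n:ℝ) * (1 + ell n / n + c / n) = n + ell n + c := by field_simp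
  set D := 1 + β n / ↑n * ell n with hDdef
  rw [neg_mul, div_mul_eq_mul_div, h3, eq_div_iff hD', add_mul, neg_mul,
    div_mul_cancel₀ _ hD', hDdef]
  field_simp
  ring

lemma firstTerm_tendsto_finite (β : ℕ → ℝ) (hβ : ∀ n, β n ∈ Set.Icc (0:ℝ) 1) (c : ℝ) (γr : ℝ)
    (h1 : Tendsto (fun n : ℕ => (1 - β n) * ell n) atTop (𝓝 γr)) :
    Tendsto (fun n : ℕ => Real.exp n *
        Real.exp (-((n : ℝ) / (1 + β n / n * ell n)) * (1 + ell n / n + c / n)))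
      atTop (𝓝 (Real.exp (-γr - c))) := by
  have hE : Tendsto (fun n : ℕ => (-((1 - β n) * ell n) - c) / (1 + β n / n * ell n)) atTop
      (𝓝 ((-γr - c) / 1)) :=
    (h1.neg.sub_const c).div (denom_tendsto β hβ) one_ne_zero
  rw [div_one] at hE
  refine Tendsto.congr' ?_ ((Real.continuous_exp.tendsto _).comp hE)
  filter_upwards [firstTerm_eq β hβ c] with n h using h.symm

lemma firstTerm_tendsto_top (β : ℕ → ℝ) (hβ : ∀ n, β n ∈ Set.Icc (0:ℝ) 1) (c : ℝ)
    (h1 : Tendsto (fun n : ℕ => (1 - β n) * ell n) atTop atTop) :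
    Tendsto (fun n : ℕ => Real.exp n *
        Real.exp (-((n : ℝ) / (1 + β n / n * ell n)) * (1 + ell n / n + c / n)))
      atTop (𝓝 0) := by
  have hnum : Tendsto (fun n : ℕ => -((1 - β n) * ell n) - c) atTop atBot := by
    have := tendsto_neg_atTop_atBot.comp h1
    exact tendsto_atBot_add_const_right _ (-c) this
  have hinv : Tendsto (fun n : ℕ => (1 + β n / n * ell n)⁻¹) atTop (𝓝 1) := by
    simpa using (denom_tendsto β hβ).inv₀ one_ne_zero
  have hE : Tendsto (fun n : ℕ => (-((1 - β n) * ell n) - c) / (1 + β n / n * ell n)) atTop atBot := by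
    simpa [div_eq_mul_inv] using hnum.atBot_mul_pos one_pos hinv
  refine Tendsto.congr' ?_ (Real.tendsto_exp_atBot.comp hE)
  filter_upwards [firstTerm_eq β hβ c] with n h using h.symm

lemma gamma_finite_extract (β : ℕ → ℝ) (hβ : ∀ n, β n ∈ Set.Icc (0:ℝ) 1) (γ : ℝ≥0∞) (hne : γ ≠ ⊤)
    (hγ : Tendsto (fun n => ENNReal.ofReal ((1 - β n) * ell n)) atTop (𝓝 γ)) :
    Tendsto (fun n : ℕ => (1 - β n) * ell n) atTop (𝓝 γ.toReal) := by
  have h := (ENNReal.tendsto_toReal hne).comp hγ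
  refine h.congr' ?_
  filter_upwards [tendsto_ell_atTop.eventually_ge_atTop 0] with n h1
  have h2 : 0 ≤ (1 - β n) * ell n := mul_nonneg (by linarith [(hβ n).2]) h1
  simp [Function.comp, ENNReal.toReal_ofReal h2]

lemma gamma_top_extract (β : ℕ → ℝ)
    (hγ : Tendsto (fun n => ENNReal.ofReal ((1 - β n) * ell n)) atTop (𝓝 ⊤)) :
    Tendsto (fun n : ℕ => (1 - β n) * ell n) atTop atTop := by
  rw [ENNReal.tendsto_nhds_top_iff_nnreal] at hγ
  refine tendsto_atTop.2 fun b => ?_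
  filter_upwards [hγ b.toNNReal] with n hn
  have h0 : (0:ℝ) < (1 - β n) * ell n := by
    by_contra h
    push_neg at h
    rw [ENNReal.ofReal_eq_zero.2 h] at hn
    simp at hn
  rw [ENNReal.ofReal, ENNReal.coe_lt_coe] at hn
  calc b ≤ (b.toNNReal : ℝ) := Real.le_coe_toNNReal b
    _ ≤ (((1 - β n) * ell n).toNNReal : ℝ) := by exact_mod_cast hn.le
    _ = (1 - β n) * ell n := Real.coe_toNNReal _ h0.le


lemma integral_eval {A h s : ℝ} (hA : 0 < A) (hh : 0 < h) (hs : 0 < s) (N : ℕ) :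
    ∫ x in (0:ℝ)..(N:ℝ), (A + x*h) ^ (-(1+s)) =
      (A ^ (-s) - (A + N*h) ^ (-s)) / (s*h) := by
  have hposOn : ∀ x ∈ Set.uIcc (0:ℝ) (N:ℝ), 0 < A + x*h := by
    intro x hx
    rw [Set.uIcc_of_le (by positivity)] at hx
    nlinarith [hx.1]
  have hderiv : ∀ x ∈ Set.uIcc (0:ℝ) (N:ℝ),
      HasDerivAt (fun y => -((A + y*h) ^ (-s)) / (s*h)) ((A + x*h) ^ (-(1+s))) x := by
    intro x hx
    have hpos := hposOn x hx
    have hg : HasDerivAt (fun y : ℝ => A + y*h) h x := (hasDerivAt_mul_const h).const_add A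
    have hr : HasDerivAt (fun y : ℝ => y ^ (-s)) (-s * (A + x*h) ^ (-s - 1)) (A + x*h) :=
      Real.hasDerivAt_rpow_const (Or.inl (ne_of_gt hpos))
    have hcomp := (hr.comp x hg)
    have hfinal := (hcomp.div_const (s*h)).neg
    have : -(-s * (A + x*h) ^ (-s - 1) * h / (s*h)) = (A + x*h) ^ (-(1+s)) := by
      have he : -s - 1 = -(1+s) := by ring
      rw [he]
      field_simp
    rw [this] at hfinal
    convert hfinal using 2
    · rfl
    · rfl
    · simp [neg_div]
  have hint : IntervalIntegrable (fun x => (A + x*h) ^ (-(1+s))) MeasureTheory.volume 0 (N:ℝ) := by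
    apply ContinuousOn.intervalIntegrable
    apply ContinuousOn.rpow_const
    · exact (continuous_const.add (continuous_mul_right h)).continuousOn
    · exact fun x hx => Or.inl (ne_of_gt (hposOn x hx))
  have := intervalIntegral.integral_eq_sub_of_hasDerivAt hderiv hint
  rw [this]
  have h0 : (A + (0:ℝ)*h) = A := by ring
  rw [h0]
  field_simp
  ring



/-- the `s` parameter -/
noncomputable def sfun (c : ℝ) (n : ℕ) : ℝ := (ell n + c) / n

/-- right endpoint value -/
noncomputable def bnd (n : ℕ) : ℝ := Real.exp n + ((9:ℝ)^n - 1) * Real.exp (-(n:ℝ))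

/-- closed form of the integral approximation -/
noncomputable def Gfun (c : ℝ) (n : ℕ) : ℝ :=
  ((Real.exp n) ^ (-(sfun c n)) - (bnd n) ^ (-(sfun c n))) / (sfun c n)

lemma sum_bounds (c : ℝ) (n : ℕ) (hn : 1 ≤ n) (hs : 0 < sfun c n) :
    Gfun c n - Real.exp (-(n:ℝ)) * Real.exp (-(n:ℝ) * (1 + sfun c n)) ≤
      (∑ i ∈ Finset.Icc (2 : ℕ) (9 ^ n),
        Real.exp (-(n : ℝ)) *
          Real.exp (-Real.log (Real.exp n + ((i : ℝ) - 1) * Real.exp (-(n : ℝ))) *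
            (1 + ell n / n + c / n))) ∧
      (∑ i ∈ Finset.Icc (2 : ℕ) (9 ^ n),
        Real.exp (-(n : ℝ)) *
          Real.exp (-Real.log (Real.exp n + ((i : ℝ) - 1) * Real.exp (-(n : ℝ))) *
            (1 + ell n / n + c / n))) ≤ Gfun c n := by
  have hn' : (0:ℝ) < n := by exact_mod_cast hn
  set s : ℝ := sfun c n with hsdef
  set t : ℝ := 1 + s with htdef
  have ht0 : 0 < t := by simp only [htdef]; linarith
  set A : ℝ := Real.exp n with hAdef
  set h : ℝ := Real.exp (-(n:ℝ)) with hhdef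
  have hA : 0 < A := Real.exp_pos _
  have hh : 0 < h := Real.exp_pos _
  set N : ℕ := 9^n - 1 with hNdef
  have h9 : 1 ≤ 9^n := Nat.one_le_pow _ _ (by norm_num)
  have hN9 : ((N:ℕ):ℝ) = (9:ℝ)^n - 1 := by
    simp only [hNdef]
    push_cast [h9]
    ring
  set f : ℝ → ℝ := fun x => (A + x*h) ^ (-t) with hfdef
  -- rewrite the sum
  have harg : 1 + ell n / n + c / n = t := by
    simp only [htdef, hsdef, sfun, add_div]
    ring
  have hsum_eq : (∑ i ∈ Finset.Icc (2 : ℕ) (9 ^ n),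
      Real.exp (-(n : ℝ)) *
        Real.exp (-Real.log (Real.exp n + ((i : ℝ) - 1) * Real.exp (-(n : ℝ))) *
          (1 + ell n / n + c / n))) = h * ∑ i ∈ Finset.range N, f ((0:ℝ) + (i + 1 : ℕ)) := by
    rw [Finset.mul_sum, harg, ← Finset.Ico_add_one_right_eq_Icc, Finset.sum_Ico_eq_sum_range]
    have hcount : 9^n + 1 - 2 = N := by omega
    rw [hcount]
    refine Finset.sum_congr rfl fun i _ => ?_
    have hbase : 0 < Real.exp (n:ℝ) + (((2 + i : ℕ) : ℝ) - 1) * Real.exp (-(n:ℝ)) := by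
      have : (1:ℝ) ≤ ((2 + i : ℕ) : ℝ) := by push_cast; linarith
      nlinarith [Real.exp_pos ((n:ℝ)), Real.exp_pos (-(n:ℝ))]
    rw [show -Real.log (Real.exp (n:ℝ) + (((2 + i : ℕ) : ℝ) - 1) * Real.exp (-(n:ℝ))) * t
        = Real.log (Real.exp (n:ℝ) + (((2 + i : ℕ) : ℝ) - 1) * Real.exp (-(n:ℝ))) * (-t) by ring]
    rw [← Real.rpow_def_of_pos (by push_cast at hbase ⊢; exact hbase)]
    simp only [hfdef, hAdef, hhdef]
    push_cast
    ring_nf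
  rw [hsum_eq]
  -- antitone
  have hposx : ∀ x : ℝ, 0 ≤ x → 0 < A + x*h := by
    intro x hx
    positivity
  have hf_anti : AntitoneOn f (Set.Icc (0:ℝ) (0 + N)) := by
    intro x hx y hy hxy
    simp only [hfdef]
    apply Real.rpow_le_rpow_of_nonpos (hposx x hx.1) (by nlinarith [hx.1]) (by linarith)
  have e_upper := hf_anti.sum_le_integral
  have e_lower := hf_anti.integral_le_sum
  -- integral value
  have hIval : (∫ x in (0:ℝ)..((0:ℝ) + N), f x) = (A ^ (-s) - (A + N*h) ^ (-s)) / (s*h) := by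
    rw [zero_add]
    have := integral_eval hA hh hs N
    simp only [hfdef]
    rw [show -t = -(1+s) by simp [htdef]]
    exact this
  -- G = h * integral
  have hG_eq : Gfun c n = h * ((A ^ (-s) - (A + N*h) ^ (-s)) / (s*h)) := by
    rw [Gfun, ← hsdef, ← hAdef]
    have hb : bnd n = A + N*h := by
      rw [bnd, hN9, ← hAdef, ← hhdef]
    rw [hb]
    field_simp
  constructor
  · -- lower bound
    have hsum_shift : ∑ i ∈ Finset.range N, f ((0:ℝ) + (i + 1 : ℕ)) ≥
        (∑ i ∈ Finset.range N, f ((0:ℝ) + (i : ℕ))) - f 0 := by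
      have h1 : ∑ i ∈ Finset.range (N+1), f (i:ℕ) =
          (∑ i ∈ Finset.range N, f ((i+1 : ℕ))) + f ((0:ℕ)) := Finset.sum_range_succ' _ _
      have h2 : ∑ i ∈ Finset.range (N+1), f (i:ℕ) =
          (∑ i ∈ Finset.range N, f (i:ℕ)) + f ((N:ℕ)) := Finset.sum_range_succ _ _
      have h3 : 0 ≤ f ((N:ℕ)) := by
        simp only [hfdef]
        positivity
      simp only [zero_add]
      push_cast at h1 h2 ⊢
      linarith
    have e2 : ((∑ i ∈ Finset.range N, f ((0:ℝ) + (i : ℕ))) - f 0 : ℝ) ≥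
        (∫ x in (0:ℝ)..((0:ℝ) + N), f x) - f 0 := by linarith [e_lower]
    have hf0 : f 0 = Real.exp (-(n:ℝ) * (1 + s)) := by
      simp only [hfdef]
      rw [zero_mul, add_zero, hAdef, Real.rpow_def_of_pos (Real.exp_pos _), Real.log_exp]
      congr 1
      rw [htdef]
      ring
    calc Gfun c n - Real.exp (-(n:ℝ)) * Real.exp (-(n:ℝ) * (1 + sfun c n))
        = h * ((∫ x in (0:ℝ)..((0:ℝ) + N), f x) - f 0) := by
          rw [hIval, mul_sub, ← hG_eq, hf0, ← hsdef, ← hhdef]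
      _ ≤ h * ((∑ i ∈ Finset.range N, f ((0:ℝ) + (i : ℕ))) - f 0) :=
          mul_le_mul_of_nonneg_left e2 hh.le
      _ ≤ h * ∑ i ∈ Finset.range N, f ((0:ℝ) + (i + 1 : ℕ)) :=
          mul_le_mul_of_nonneg_left hsum_shift hh.le
  · calc h * ∑ i ∈ Finset.range N, f ((0:ℝ) + (i + 1 : ℕ))
        ≤ h * (∫ x in (0:ℝ)..((0:ℝ) + N), f x) := by
          exact mul_le_mul_of_nonneg_left e_upper hh.le
      _ = Gfun c n := by rw [hIval, ← hG_eq]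









lemma log_nine_gt_two : 2 < Real.log 9 := by
  rw [Real.lt_log_iff_exp_lt (by norm_num : (0:ℝ) < 9)]
  have h := Real.exp_one_lt_d9
  calc Real.exp 2 = Real.exp 1 * Real.exp 1 := by rw [← Real.exp_add]; norm_num
    _ < 2.7182818286 * 2.7182818286 := by
        exact mul_lt_mul'' h h (Real.exp_pos 1).le (Real.exp_pos 1).le
    _ < 9 := by norm_num

lemma sfun_pos_eventually (c : ℝ) : ∀ᶠ n : ℕ in atTop, 0 < sfun c n ∧ 1 ≤ ell n + c := by
  filter_upwards [tendsto_ell_atTop.eventually_ge_atTop (1 - c), eventually_gt_atTop 0]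
    with n h1 h2
  have hn : (0:ℝ) < n := by exact_mod_cast h2
  refine ⟨div_pos (by linarith) hn, by linarith⟩

lemma tendsto_L1 (c : ℝ) :
    Tendsto (fun n : ℕ => (Real.exp n) ^ (-(sfun c n)) / (sfun c n)) atTop
      (𝓝 (Real.exp (-c))) := by
  have h : Tendsto (fun n : ℕ => Real.exp (-c) * (Real.log n / (ell n + c))) atTop
      (𝓝 (Real.exp (-c))) := by
    have := (tendsto_log_div_ell_add c).const_mul (Real.exp (-c))
    rwa [mul_one] at this
  refine h.congr' ?_
  filter_upwards [sfun_pos_eventually c, eventually_ge_atTop 2] with n ⟨h1, h2⟩ hn2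
  have hn1 : (1:ℝ) < n := by exact_mod_cast Nat.lt_of_lt_of_le one_lt_two hn2
  have hn : (0:ℝ) < n := by linarith
  have hlog : 0 < Real.log n := Real.log_pos hn1
  have hlc : (0:ℝ) < ell n + c := by linarith
  have hexp : (Real.exp (n:ℝ)) ^ (-(sfun c n)) = Real.exp (-c) * (Real.log n / n) := by
    rw [Real.rpow_def_of_pos (Real.exp_pos _), Real.log_exp]
    have : (n:ℝ) * (-(sfun c n)) = -c + (- ell n) := by
      rw [sfun]
      field_simp
      ring
    rw [this, Real.exp_add]
    congr 1
    rw [ell, Real.exp_neg, Real.exp_log (by positivity), inv_div]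
  rw [hexp, sfun]
  field_simp

noncomputable def Ufun (c : ℝ) (n : ℕ) : ℝ :=
  Real.exp ((1 - (Real.log 9 - 1)) * Real.log n + (Real.log 9 - 1) * Real.log (Real.log n)
    - (Real.log 9 - 1) * c + sfun c n * Real.log 2)

lemma tendsto_U (c : ℝ) : Tendsto (Ufun c) atTop (𝓝 0) := by
  set κ : ℝ := Real.log 9 - 1 with hκ
  have hκ1 : 1 < κ := by have := log_nine_gt_two; simp only [hκ]; linarith
  have hA : Tendsto (fun n : ℕ => (1 - κ) + κ * (Real.log (Real.log n) / Real.log n)) atTop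
      (𝓝 (1 - κ)) := by
    have := (tendsto_loglog_div_log.const_mul κ).const_add (1 - κ)
    rwa [mul_zero, add_zero] at this
  have hB : Tendsto (fun n : ℕ => Real.log n * ((1 - κ) + κ * (Real.log (Real.log n) / Real.log n)))
      atTop atBot := tendsto_log_nat.atTop_mul_neg (by linarith) hA
  have hC : Tendsto (fun n : ℕ => -κ * c + sfun c n * Real.log 2) atTop (𝓝 (-κ * c)) := by
    have := ((tendsto_s c).mul_const (Real.log 2)).const_add (-κ * c)
    rwa [zero_mul, add_zero] at this
  have hE : Tendsto (fun n : ℕ =>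
      Real.log n * ((1 - κ) + κ * (Real.log (Real.log n) / Real.log n))
        + (-κ * c + sfun c n * Real.log 2)) atTop atBot := hB.atBot_add hC
  have h0 := Real.tendsto_exp_atBot.comp hE
  refine h0.congr' ?_
  filter_upwards [tendsto_log_nat.eventually_gt_atTop 0] with n hlog
  simp only [Function.comp, Ufun, sfun]
  congr 1
  field_simp
  ring

lemma tendsto_L2 (c : ℝ) :
    Tendsto (fun n : ℕ => (bnd n) ^ (-(sfun c n)) / (sfun c n)) atTop (𝓝 0) := by
  set κ : ℝ := Real.log 9 - 1 with hκ
  refine squeeze_zero' ?_ ?_ (tendsto_U c)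
  · filter_upwards [sfun_pos_eventually c] with n ⟨h1, h2⟩
    have hbnd : 0 ≤ bnd n := by
      rw [bnd]
      have := Real.exp_pos ((n:ℝ))
      have h4 := Real.exp_pos (-(n:ℝ))
      have hp1 : (1:ℝ) ≤ (9:ℝ)^n := one_le_pow₀ (by norm_num)
      nlinarith
    exact div_nonneg (Real.rpow_nonneg hbnd _) h1.le
  · filter_upwards [sfun_pos_eventually c, eventually_ge_atTop 2, ell_eq',
      tendsto_log_nat.eventually_gt_atTop 0] with n ⟨h1, h2⟩ hn2 hell hlog
    have hn1 : (1:ℝ) < n := by exact_mod_cast Nat.lt_of_lt_of_le one_lt_two hn2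
    have hn : (0:ℝ) < n := by linarith
    have hpow2 : (2:ℝ) ≤ (9:ℝ)^n := by
      calc (2:ℝ) ≤ 9^1 := by norm_num
        _ ≤ (9:ℝ)^n := pow_le_pow_right₀ (by norm_num) (by omega)
    -- step 1 : exp (n κ - log 2) ≤ bnd n
    have hstep1 : Real.exp ((n:ℝ) * κ - Real.log 2) ≤ bnd n := by
      have hexp9 : Real.exp ((n:ℝ) * Real.log 9) = (9:ℝ)^n := by
        rw [Real.exp_nat_mul, Real.exp_log (by norm_num : (0:ℝ) < 9)]
      have : Real.exp ((n:ℝ) * κ - Real.log 2) =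
          (9:ℝ)^n * Real.exp (-(n:ℝ)) / 2 := by
        rw [hκ, show (n:ℝ) * (Real.log 9 - 1) - Real.log 2
            = (n:ℝ) * Real.log 9 + (-(n:ℝ)) + (- Real.log 2) by ring,
          Real.exp_add, Real.exp_add, hexp9, Real.exp_neg (Real.log 2),
          Real.exp_log (by norm_num : (0:ℝ) < 2)]
        ring
      rw [this, bnd]
      have he := Real.exp_pos (-(n:ℝ))
      have he2 := Real.exp_pos ((n:ℝ))
      nlinarith
    -- step 2 : rpow bound
    have hstep2 : (bnd n) ^ (-(sfun c n)) ≤ Real.exp (-(ell n + c) * κ + sfun c n * Real.log 2) := by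
      have h3 := Real.rpow_le_rpow_of_nonpos (Real.exp_pos _) hstep1 (neg_nonpos.2 h1.le)
      refine h3.trans_eq ?_
      rw [Real.rpow_def_of_pos (Real.exp_pos _), Real.log_exp]
      congr 1
      have hns : (n:ℝ) * sfun c n = ell n + c := by
        rw [sfun]; field_simp
      linear_combination (-κ) * hns
    -- step 3 : divide by s
    calc (bnd n) ^ (-(sfun c n)) / (sfun c n)
        ≤ Real.exp (-(ell n + c) * κ + sfun c n * Real.log 2) / sfun c n := by
          gcongr
      _ = Real.exp (-(ell n + c) * κ + sfun c n * Real.log 2) * ((n:ℝ) / (ell n + c)) := by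
          rw [sfun, div_eq_mul_inv _ ((ell n + c)/(n:ℝ)), inv_div]
      _ ≤ Real.exp (-(ell n + c) * κ + sfun c n * Real.log 2) * n := by
          apply mul_le_mul_of_nonneg_left ?_ (Real.exp_pos _).le
          exact div_le_self hn.le h2
      _ = Ufun c n := by
          rw [Ufun, ← Real.exp_log hn, ← Real.exp_add, Real.exp_log hn, hell]
          congr 1
          rw [hκ]
          ring


lemma tendsto_G (c : ℝ) : Tendsto (Gfun c) atTop (𝓝 (Real.exp (-c))) := by
  have h := (tendsto_L1 c).sub (tendsto_L2 c)
  rw [sub_zero] at h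
  refine h.congr fun n => ?_
  rw [Gfun, sub_div]

lemma tendsto_eps (c : ℝ) :
    Tendsto (fun n : ℕ => Real.exp (-(n:ℝ)) * Real.exp (-(n:ℝ) * (1 + sfun c n))) atTop (𝓝 0) := by
  refine squeeze_zero' ?_ ?_ (Real.tendsto_exp_neg_atTop_nhds_zero.comp tendsto_natCast_atTop_atTop)
  · filter_upwards with n; positivity
  · filter_upwards [sfun_pos_eventually c, eventually_ge_atTop 1] with n ⟨h1, _⟩ hn1
    have hn : (0:ℝ) ≤ n := Nat.cast_nonneg n
    have : Real.exp (-(n:ℝ) * (1 + sfun c n)) ≤ 1 := by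
      rw [Real.exp_le_one_iff]
      nlinarith
    calc Real.exp (-(n:ℝ)) * Real.exp (-(n:ℝ) * (1 + sfun c n)) ≤ Real.exp (-(n:ℝ)) * 1 :=
          mul_le_mul_of_nonneg_left this (Real.exp_pos _).le
      _ = Real.exp (-(n:ℝ)) := mul_one _

lemma tendsto_sum_part (c : ℝ) :
    Tendsto (fun n : ℕ => ∑ i ∈ Finset.Icc (2 : ℕ) (9 ^ n),
        Real.exp (-(n : ℝ)) *
          Real.exp (-Real.log (Real.exp n + ((i : ℝ) - 1) * Real.exp (-(n : ℝ))) *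
            (1 + ell n / n + c / n))) atTop (𝓝 (Real.exp (-c))) := by
  have hlow : Tendsto (fun n : ℕ => Gfun c n
      - Real.exp (-(n:ℝ)) * Real.exp (-(n:ℝ) * (1 + sfun c n))) atTop (𝓝 (Real.exp (-c))) := by
    have := (tendsto_G c).sub (tendsto_eps c)
    rwa [sub_zero] at this
  refine tendsto_of_tendsto_of_tendsto_of_le_of_le' hlow (tendsto_G c) ?_ ?_
  · filter_upwards [sfun_pos_eventually c, eventually_ge_atTop 1] with n ⟨h1, _⟩ hn1
    exact (sum_bounds c n hn1 h1).1
  · filter_upwards [sfun_pos_eventually c, eventually_ge_atTop 1] with n ⟨h1, _⟩ hn1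
    exact (sum_bounds c n hn1 h1).2


end Aux

/-- Equation (17) of Barrera–Ycart: if `γ = lim (1-β_n) ℓ_n` exists in `[0, ∞]`,
then for every real `c`, `d_n(1 + ℓ_n/n + c/n) → e^{-c} (1 + e^{-γ})`
(with the convention `e^{-∞} = 0`). -/
theorem lemma_betan_main_step
    (β : ℕ → ℝ) (hβ : ∀ n, β n ∈ Set.Icc (0 : ℝ) 1)
    (γ : ℝ≥0∞)
    (hγ : Tendsto (fun n => ENNReal.ofReal ((1 - β n) * ell n)) atTop (𝓝 γ))
    (c : ℝ) :
    Tendsto (fun n => dCut β n (1 + ell n / n + c / n)) atTop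
      (𝓝 (Real.exp (-c) * (1 + if γ = ⊤ then 0 else Real.exp (-γ.toReal)))) := by
  have hsum := tendsto_sum_part c
  by_cases hne : γ = ⊤
  · have hT := firstTerm_tendsto_top β hβ c (gamma_top_extract β (hne ▸ hγ))
    have hcomb := hT.add hsum
    rw [zero_add] at hcomb
    simp only [dCut, hne, if_pos, add_zero, mul_one]
    exact hcomb
  · have hT := firstTerm_tendsto_finite β hβ c γ.toReal (gamma_finite_extract β hβ γ hne hγ)
    have hcomb := hT.add hsum
    have hval : Real.exp (-c) * (1 + Real.exp (-γ.toReal)) =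
        Real.exp (-γ.toReal - c) + Real.exp (-c) := by
      rw [sub_eq_add_neg, Real.exp_add]
      ring
    simp only [dCut, hne, if_false]
    rw [hval]
    exact hcomb
end
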